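/- Suppose the evaluation function is the maximum of affine pieces: g(x,z) = max_{i ∈ [n_f]} ( f_i(x) + F_i(x)z ), i.e., g(x,z) = min{ y ∈ ℝ : y·1 ≥ f(x) + F(x)z }, corresponding to B = 1 (the all-ones column vector), d = 1 and K = ℝ^{n_f}₊, so that the dual uncertainty set is the simplex P = {ρ ∈ ℝ^{n_f}₊ : 1ᵀρ = 1}. Under the polyhedral support and polyhedral penalty assumptions, the affine dual recourse set Ȳ equals Y; that is, the safe approximation by affine dual recourse adaptation is exact: (x, υ, k) ∈ X × ℝ × ℝ₊ satisfies max_{z∈Z} ( g(x,z) − k·p(z) ) ≤ υ if and only if there exist affine functions β : ℝ^{n_f} → ℝ^{n_h}, μ : ℝ^{n_f} → ℝ^{n_μ}, η : ℝ^{n_f} → ℝ with, for all ρ ∈ P: ρᵀf(x) + β(ρ)ᵀh + η(ρ) ≤ υ; M(F(x)ᵀρ − Hᵀβ(ρ)) + Nμ(ρ) + s·η(ρ) ≤ t·k; β(ρ) ≥ 0; η(ρ) ≥ 0. -/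

import Mathlib

open Matrix Finset
open scoped InnerProductSpace

/-- The conic hull of finitely many vectors is closed. -/
theorem isClosed_coneSet : ∀ (m : ℕ) {E : Type*} [NormedAddCommGroup E] [NormedSpace ℝ E]
    [FiniteDimensional ℝ E] (v : Fin m → E),
    IsClosed {x : E | ∃ u : Fin m → ℝ, 0 ≤ u ∧ x = ∑ i, u i • v i} := by
  intro m
  induction m using Nat.strong_induction_on with
  | _ m IH =>
    intro E _ _ _ v
    by_cases hLI : LinearIndependent ℝ v
    · -- linearly independent: closed embedding of the positive orthant
      let L : (Fin m → ℝ) →ₗ[ℝ] E :=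
        { toFun := fun u => ∑ i, u i • v i
          map_add' := by
            intro a b
            simp [add_smul, Finset.sum_add_distrib]
          map_smul' := by
            intro r a
            simp [smul_smul, Finset.smul_sum] }
      have hker : LinearMap.ker L = ⊥ := by
        rw [LinearMap.ker_eq_bot']
        intro u hu
        exact funext fun i => Fintype.linearIndependent_iff.mp hLI u hu i
      have hemb := LinearMap.isClosedEmbedding_of_injective (𝕜 := ℝ) hker
      have hset : {x : E | ∃ u : Fin m → ℝ, 0 ≤ u ∧ x = ∑ i, u i • v i}
          = L '' {u | 0 ≤ u} := by
        ext x
        constructor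
        · rintro ⟨u, hu, rfl⟩; exact ⟨u, hu, rfl⟩
        · rintro ⟨u, hu, rfl⟩; exact ⟨u, hu, rfl⟩
      rw [hset]
      refine hemb.isClosedMap _ ?_
      have : {u : Fin m → ℝ | 0 ≤ u} = Set.Ici (0 : Fin m → ℝ) := rfl
      rw [this]; exact isClosed_Ici
    · -- dependent: the cone is a finite union of cones on fewer generators
      rcases m with - | m'
      · exact absurd (linearIndependent_empty_type) hLI
      obtain ⟨g, hgsum, i₀, hgne⟩ := Fintype.not_linearIndependent_iff.mp hLI
      -- ensure some positive coefficient
      obtain ⟨c, hcsum, j₀, hcpos⟩ :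
          ∃ c : Fin (m' + 1) → ℝ, ∑ i, c i • v i = 0 ∧ ∃ j, 0 < c j := by
        by_cases hpos : ∃ j, 0 < g j
        · exact ⟨g, hgsum, hpos⟩
        · push_neg at hpos
          refine ⟨-g, by simp [hgsum], i₀, ?_⟩
          have := hpos i₀
          simp only [Pi.neg_apply]
          cases lt_or_eq_of_le this with
          | inl h => linarith
          | inr h => exact absurd h hgne
      have hset : {x : E | ∃ u : Fin (m' + 1) → ℝ, 0 ≤ u ∧ x = ∑ i, u i • v i}
          = ⋃ i : Fin (m' + 1),
            {x : E | ∃ u : Fin m' → ℝ, 0 ≤ u ∧ x = ∑ j, u j • v (i.succAbove j)} := by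
        ext x
        constructor
        · rintro ⟨u, hu, hx⟩
          have hu0 : ∀ j, (0:ℝ) ≤ u j := fun j => hu j
          -- shift by τ • c to zero out a coordinate
          set P : Finset (Fin (m' + 1)) := Finset.univ.filter (fun j => 0 < c j) with hP
          have hPne : P.Nonempty := ⟨j₀, by simp [hP, hcpos]⟩
          obtain ⟨i₁, hi₁P, hi₁min⟩ := P.exists_min_image (fun j => u j / c j) hPne
          have hci₁ : 0 < c i₁ := by simpa [hP] using hi₁P
          set τ := u i₁ / c i₁ with hτ
          have hτ0 : 0 ≤ τ := div_nonneg (hu0 i₁) hci₁.le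
          set u' : Fin (m' + 1) → ℝ := fun j => u j - τ * c j with hu'
          have hu'nonneg : ∀ j, 0 ≤ u' j := by
            intro j
            by_cases hcj : 0 < c j
            · have hjP : j ∈ P := by simp [hP, hcj]
              have h2 : τ ≤ u j / c j := hi₁min j hjP
              have hτle : τ * c j ≤ u j := by
                calc τ * c j ≤ (u j / c j) * c j := by nlinarith
                  _ = u j := by field_simp
              simp only [hu']
              linarith
            · push_neg at hcj
              have h3 : τ * c j ≤ 0 := mul_nonpos_of_nonneg_of_nonpos hτ0 hcj
              simp only [hu']
              linarith [hu0 j]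
          have hu'i₁ : u' i₁ = 0 := by
            simp only [hu', hτ]; field_simp; ring
          have hxsum : x = ∑ j, u' j • v j := by
            have : ∑ j, u' j • v j = ∑ j, u j • v j - τ • ∑ j, c j • v j := by
              rw [Finset.smul_sum, ← Finset.sum_sub_distrib]
              congr 1; ext j; rw [sub_smul, smul_smul]
            rw [this, hcsum, smul_zero, sub_zero, hx]
          refine Set.mem_iUnion.mpr ⟨i₁, ⟨fun j => u' (i₁.succAbove j), fun j => hu'nonneg _, ?_⟩⟩
          rw [hxsum, Fin.sum_univ_succAbove _ i₁, hu'i₁, zero_smul, zero_add]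
        · intro hxmem
          obtain ⟨i, u, hu, rfl⟩ := Set.mem_iUnion.mp hxmem
          refine ⟨i.insertNth 0 u, ?_, ?_⟩
          · intro j
            rcases eq_or_ne j i with h | h
            · subst h; simp
            · obtain ⟨j', rfl⟩ := Fin.exists_succAbove_eq h
              simpa using hu j'
          · rw [Fin.sum_univ_succAbove _ i]
            simp
      rw [hset]
      exact isClosed_iUnion_of_finite fun i =>
        IH m' (Nat.lt_succ_self m') (fun j => v (i.succAbove j))

/-- closedness for an arbitrary fintype index -/
theorem isClosed_coneSet' {ι : Type*} [Fintype ι] {E : Type*} [NormedAddCommGroup E]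
    [NormedSpace ℝ E] [FiniteDimensional ℝ E] (v : ι → E) :
    IsClosed {x : E | ∃ u : ι → ℝ, 0 ≤ u ∧ x = ∑ i, u i • v i} := by
  classical
  obtain ⟨e⟩ := Fintype.truncEquivFin ι
  have hset : {x : E | ∃ u : ι → ℝ, 0 ≤ u ∧ x = ∑ i, u i • v i}
      = {x : E | ∃ u : Fin (Fintype.card ι) → ℝ, 0 ≤ u ∧ x = ∑ i, u i • v (e.symm i)} := by
    ext x
    constructor
    · rintro ⟨u, hu, rfl⟩
      exact ⟨fun j => u (e.symm j), fun j => hu _,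
        (Equiv.sum_comp e.symm (fun i : ι => u i • v i)).symm⟩
    · rintro ⟨u, hu, rfl⟩
      refine ⟨fun i => u (e i), fun i => hu _, ?_⟩
      rw [← Equiv.sum_comp e.symm (fun i : ι => u (e i) • v i)]
      simp
  rw [hset]
  exact isClosed_coneSet _ _

/-- **Homogeneous Farkas lemma.** -/
theorem farkas_cone {m n : Type*} [Fintype m] [Fintype n] (A : Matrix m n ℝ) (c : n → ℝ)
    (hc : ∀ x : n → ℝ, A.mulVec x ≤ 0 → c ⬝ᵥ x ≤ 0) :
    ∃ y : m → ℝ, 0 ≤ y ∧ Aᵀ.mulVec y = c := by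
  classical
  -- work in Euclidean space
  let E := EuclideanSpace ℝ n
  let φ := EuclideanSpace.equiv n ℝ
  let v : m → E := fun i => φ.symm (A i)
  have hinner : ∀ a b : E, ⟪a, b⟫_ℝ = ∑ j, a j * b j := by
    intro a b
    rw [PiLp.inner_apply]
    simp [RCLike.inner_apply, mul_comm]
  let C : ConvexCone ℝ E :=
    { carrier := {x : E | ∃ u : m → ℝ, 0 ≤ u ∧ x = ∑ i, u i • v i}
      smul_mem' := by
        rintro r hr x ⟨u, hu, rfl⟩
        refine ⟨fun i => r * u i, fun i => mul_nonneg hr.le (hu i), ?_⟩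
        rw [Finset.smul_sum]
        exact Finset.sum_congr rfl fun i _ => by rw [smul_smul]
      add_mem' := by
        rintro x ⟨u, hu, rfl⟩ y ⟨w, hw, rfl⟩
        refine ⟨u + w, fun i => add_nonneg (hu i) (hw i), ?_⟩
        rw [← Finset.sum_add_distrib]
        exact Finset.sum_congr rfl fun i _ => by rw [Pi.add_apply, add_smul] }
  have hCne : (C : Set E).Nonempty := ⟨0, 0, le_refl _, by simp⟩
  have hCclosed : IsClosed (C : Set E) := isClosed_coneSet' v
  by_cases hmem : (φ.symm c) ∈ C
  · obtain ⟨u, hu, husum⟩ := hmem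
    refine ⟨u, hu, ?_⟩
    have husum' : c = ∑ i, u i • A i := by
      have h2 := congrArg φ husum
      simp only [map_sum, map_smul, ContinuousLinearEquiv.apply_symm_apply, v] at h2
      exact h2
    ext j
    rw [Matrix.mulVec, dotProduct]
    have := congrFun husum' j
    rw [Finset.sum_apply] at this
    simp only [Pi.smul_apply, smul_eq_mul] at this
    rw [this]
    exact Finset.sum_congr rfl fun i _ => by rw [Matrix.transpose_apply, mul_comm]
  · exfalso
    let K : ProperCone ℝ E :=
      { carrier := (C : Set E)
        add_mem' := fun ha hb => C.add_mem' ha hb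
        zero_mem' := ⟨0, le_refl _, by simp⟩
        smul_mem' := by
          rintro r x ⟨u, hu, rfl⟩
          refine ⟨fun i => (r : ℝ) * u i, fun i => mul_nonneg r.2 (hu i), ?_⟩
          rw [Finset.smul_sum]
          exact Finset.sum_congr rfl fun i _ => smul_smul (r : ℝ) (u i) (v i)
        isClosed' := hCclosed }
    obtain ⟨y, hy1, hy2⟩ :=
      ProperCone.hyperplane_separation' K hmem
    have hAy : ∀ i, 0 ≤ ∑ j, A i j * y j := by
      intro i
      have hvi : v i ∈ C := by
        refine ⟨fun i' => if i' = i then 1 else 0, fun i' => by dsimp only; split <;> norm_num, ?_⟩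
        simp [ite_smul, Finset.sum_ite_eq' Finset.univ i]
      have h3 := hy1 _ hvi
      rw [hinner] at h3
      simpa [v, φ] using h3
    have hneg : A.mulVec (fun j => -(y j)) ≤ 0 := by
      intro i
      simp only [Matrix.mulVec, dotProduct, Pi.zero_apply, mul_neg]
      rw [Finset.sum_neg_distrib]
      linarith [hAy i]
    have hcy := hc _ hneg
    rw [hinner] at hy2
    simp only [dotProduct, mul_neg] at hcy
    rw [Finset.sum_neg_distrib] at hcy
    have hyc : ∑ j, y j * (φ.symm c) j < 0 := by simpa only [mul_comm] using hy2
    have h4 : ∑ j, y j * c j < 0 := by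
      refine lt_of_eq_of_lt (Finset.sum_congr rfl fun j _ => ?_) hyc
      congr 1
    have h5 : 0 ≤ ∑ j, c j * y j := by linarith
    rw [Finset.sum_congr rfl fun j (_ : j ∈ Finset.univ) => mul_comm (c j) (y j)] at h5
    linarith

/-- **Affine Farkas lemma / LP strong duality.** -/
theorem farkas_affine {m n : Type*} [Fintype m] [Fintype n] (A : Matrix m n ℝ)
    (b : m → ℝ) (c : n → ℝ) (d : ℝ)
    (hfeas : ∃ x : n → ℝ, A.mulVec x ≤ b)
    (hub : ∀ x : n → ℝ, A.mulVec x ≤ b → c ⬝ᵥ x ≤ d) :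
    ∃ y : m → ℝ, 0 ≤ y ∧ Aᵀ.mulVec y = c ∧ b ⬝ᵥ y ≤ d := by
  classical
  obtain ⟨x₀, hx₀⟩ := hfeas
  -- homogenized system
  let A' : Matrix (m ⊕ Unit) (n ⊕ Unit) ℝ := fun i j =>
    match i, j with
    | Sum.inl i, Sum.inl j => A i j
    | Sum.inl i, Sum.inr _ => -b i
    | Sum.inr _, Sum.inl _ => 0
    | Sum.inr _, Sum.inr _ => -1
  let c' : n ⊕ Unit → ℝ := Sum.elim c (fun _ => -d)
  have key : ∀ x' : n ⊕ Unit → ℝ, A'.mulVec x' ≤ 0 → c' ⬝ᵥ x' ≤ 0 := by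
    intro x' hx'
    set xx : n → ℝ := fun j => x' (Sum.inl j) with hxx
    set τ : ℝ := x' (Sum.inr ()) with hτ
    have hmv : ∀ i : m, (A.mulVec xx) i - τ * b i ≤ 0 := by
      intro i
      have := hx' (Sum.inl i)
      simpa [A', Matrix.mulVec, dotProduct, Fintype.sum_sum_type, mul_comm,
        sub_eq_add_neg] using this
    have hτ0 : 0 ≤ τ := by
      have := hx' (Sum.inr ())
      simpa [A', Matrix.mulVec, dotProduct, Fintype.sum_sum_type] using this
    have hgoal : c ⬝ᵥ xx - τ * d ≤ 0 := by
      rcases eq_or_lt_of_le hτ0 with hτeq | hτpos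
      · -- τ = 0 : recession direction
        have hAxx : ∀ i, (A.mulVec xx) i ≤ 0 := by
          intro i; have := hmv i; rw [← hτeq] at this; linarith
        have hcxx : c ⬝ᵥ xx ≤ 0 := by
          by_contra hpos
          push_neg at hpos
          set r : ℝ := max 0 ((d - c ⬝ᵥ x₀) / (c ⬝ᵥ xx)) + 1 with hr
          have hr0 : 0 ≤ r := by positivity
          have hrgt : (d - c ⬝ᵥ x₀) / (c ⬝ᵥ xx) < r := by
            have := le_max_right 0 ((d - c ⬝ᵥ x₀) / (c ⬝ᵥ xx)); linarith [le_max_right 0 ((d - c ⬝ᵥ x₀) / (c ⬝ᵥ xx))]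
          have hfeas' : A.mulVec (x₀ + r • xx) ≤ b := by
            intro i
            rw [Matrix.mulVec_add, Matrix.mulVec_smul]
            have h1 := hAxx i
            have h2 := hx₀ i
            simp only [Pi.add_apply, Pi.smul_apply, smul_eq_mul]
            nlinarith
          have := hub _ hfeas'
          rw [dotProduct_add, dotProduct_smul, smul_eq_mul] at this
          have : (d - c ⬝ᵥ x₀) / (c ⬝ᵥ xx) ≥ r := by
            rw [ge_iff_le, le_div_iff₀ hpos]
            linarith
          linarith
        rw [← hτeq]; linarith
      · -- τ > 0 : scale
        have hfeas' : A.mulVec (τ⁻¹ • xx) ≤ b := by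
          intro i
          rw [Matrix.mulVec_smul]
          have := hmv i
          simp only [Pi.smul_apply, smul_eq_mul]
          rw [inv_mul_le_iff₀ hτpos]
          linarith [hmv i]
        have := hub _ hfeas'
        rw [dotProduct_smul, smul_eq_mul, inv_mul_le_iff₀ hτpos] at this
        linarith
    have : c' ⬝ᵥ x' = c ⬝ᵥ xx - τ * d := by
      simp [c', dotProduct, Fintype.sum_sum_type, xx, τ, sub_eq_add_neg, mul_comm]
    rw [this]; exact hgoal
  obtain ⟨y', hy', heq⟩ := farkas_cone A' c' key
  refine ⟨fun i => y' (Sum.inl i), fun i => hy' _, ?_, ?_⟩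
  · ext j
    have := congrFun heq (Sum.inl j)
    simpa [A', Matrix.mulVec, dotProduct, Fintype.sum_sum_type, Matrix.transpose_apply,
      Matrix.transpose, Matrix.of_apply, c'] using this
  · have := congrFun heq (Sum.inr ())
    simp only [A', Matrix.mulVec, dotProduct, Fintype.sum_sum_type,
      Matrix.transpose_apply, Matrix.transpose, Matrix.of_apply, c', Sum.elim_inr] at this
    have hσ : (0:ℝ) ≤ y' (Sum.inr ()) := hy' (Sum.inr ())
    simp only [dotProduct]
    have hbe : ∑ i, b i * y' (Sum.inl i) = d - y' (Sum.inr ()) := by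
      have h2 : (∑ i, -b i * y' (Sum.inl i)) + (-1) * y' (Sum.inr ()) = -d := by
        simpa using this
      have h3 : ∑ i, -b i * y' (Sum.inl i) = -∑ i, b i * y' (Sum.inl i) := by
        rw [← Finset.sum_neg_distrib]
        exact Finset.sum_congr rfl fun i _ => by ring
      rw [h3] at h2; linarith
    rw [hbe]
    linarith

/-- Farkas with mixed inequality and equality constraints. -/
theorem farkas_mixed {m1 m2 n : Type*} [Fintype m1] [Fintype m2] [Fintype n]
    (A : Matrix m1 n ℝ) (B : Matrix m2 n ℝ) (b1 : m1 → ℝ) (b2 : m2 → ℝ) (c : n → ℝ) (d : ℝ)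
    (hfeas : ∃ x : n → ℝ, A.mulVec x ≤ b1 ∧ B.mulVec x = b2)
    (hub : ∀ x : n → ℝ, A.mulVec x ≤ b1 → B.mulVec x = b2 → c ⬝ᵥ x ≤ d) :
    ∃ (y : m1 → ℝ) (w : m2 → ℝ), 0 ≤ y ∧
      Aᵀ.mulVec y + Bᵀ.mulVec w = c ∧ b1 ⬝ᵥ y + b2 ⬝ᵥ w ≤ d := by
  classical
  let A' : Matrix (m1 ⊕ (m2 ⊕ m2)) n ℝ := fun i j =>
    match i with
    | Sum.inl i => A i j
    | Sum.inr (Sum.inl i) => B i j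
    | Sum.inr (Sum.inr i) => -B i j
  let b' : m1 ⊕ (m2 ⊕ m2) → ℝ := Sum.elim b1 (Sum.elim b2 (fun i => -b2 i))
  have hA'mv : ∀ (x : n → ℝ) (i), (A'.mulVec x) i =
      match i with
      | Sum.inl i => (A.mulVec x) i
      | Sum.inr (Sum.inl i) => (B.mulVec x) i
      | Sum.inr (Sum.inr i) => -(B.mulVec x) i := by
    intro x i
    rcases i with i | i | i <;>
      simp [A', Matrix.mulVec, dotProduct, Finset.sum_neg_distrib]
  obtain ⟨y', hy', heq, hbd⟩ := farkas_affine A' b' c d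
    (by
      obtain ⟨x, hx1, hx2⟩ := hfeas
      refine ⟨x, fun i => ?_⟩
      rw [hA'mv]
      rcases i with i | i | i
      · exact hx1 i
      · simp [b', congrFun hx2 i]
      · simp [b', congrFun hx2 i])
    (by
      intro x hx
      refine hub x (fun i => by simpa [hA'mv, b'] using hx (Sum.inl i)) ?_
      ext i
      have h1 := hx (Sum.inr (Sum.inl i))
      have h2 := hx (Sum.inr (Sum.inr i))
      rw [hA'mv] at h1 h2
      simp only [b', Sum.elim_inr, Sum.elim_inl] at h1 h2
      linarith)
  refine ⟨fun i => y' (Sum.inl i),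
    fun i => y' (Sum.inr (Sum.inl i)) - y' (Sum.inr (Sum.inr i)),
    fun i => hy' _, ?_, ?_⟩
  · ext j
    have := congrFun heq j
    rw [Matrix.mulVec, dotProduct, Fintype.sum_sum_type, Fintype.sum_sum_type] at this
    simp only [Matrix.transpose_apply, Matrix.transpose, Matrix.of_apply, A'] at this
    simp only [Pi.add_apply, Matrix.mulVec, dotProduct, Matrix.transpose_apply,
      Matrix.transpose, Matrix.of_apply]
    rw [← this]
    congr 1
    rw [← Finset.sum_add_distrib]
    exact Finset.sum_congr rfl fun i _ => by ring
  · rw [dotProduct, Fintype.sum_sum_type, Fintype.sum_sum_type] at hbd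
    simp only [b', Sum.elim_inl, Sum.elim_inr] at hbd
    simp only [dotProduct]
    calc ∑ i, b1 i * y' (Sum.inl i)
          + ∑ i, b2 i * (y' (Sum.inr (Sum.inl i)) - y' (Sum.inr (Sum.inr i)))
        = ∑ i, b1 i * y' (Sum.inl i) + (∑ i, b2 i * y' (Sum.inr (Sum.inl i))
          + ∑ i, -b2 i * y' (Sum.inr (Sum.inr i))) := by
          rw [← Finset.sum_add_distrib]
          congr 1
          exact Finset.sum_congr rfl fun i _ => by ring
      _ ≤ d := hbd

/-- `Hᵀβ ⬝ z = β ⬝ Hz`. -/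
theorem dot_tm {a b : Type*} [Fintype a] [Fintype b] (Hm : Matrix a b ℝ)
    (β : a → ℝ) (z : b → ℝ) : Hmᵀ.mulVec β ⬝ᵥ z = β ⬝ᵥ Hm.mulVec z := by
  simp only [Matrix.mulVec, dotProduct, Matrix.transpose_apply, Finset.sum_mul,
    Finset.mul_sum]
  rw [Finset.sum_comm]
  exact Finset.sum_congr rfl fun r _ => Finset.sum_congr rfl fun j _ => by ring

theorem dot_le_dot {a : Type*} [Fintype a] {u v w : a → ℝ} (hu : 0 ≤ u) (hvw : v ≤ w) :
    u ⬝ᵥ v ≤ u ⬝ᵥ w :=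
  Finset.sum_le_sum fun i _ => mul_le_mul_of_nonneg_left (hvw i) (hu i)

set_option maxHeartbeats 4000000 in
/-- **Theorem 4 (exactness of affine dual recourse adaptation for max-of-affine
evaluation functions).**
If `g(x,z) = max_i (fᵢ(x) + Fᵢ(x)z)`, so that the dual uncertainty set is the simplex
`P = {ρ ≥ 0 : 1ᵀρ = 1}`, then under the polyhedral support and penalty assumptions the
affine dual recourse adaptation is exact: `(x,υ,k)` with `x ∈ X`, `k ≥ 0` satisfies
`g(x,z) − k·p(z) ≤ υ` for all `z ∈ Z` iff there exist affine `β, μ, η` satisfying the dual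
constraints for all `ρ ∈ P`. -/
theorem affine_dual_recourse_exact_simplex {nx nz nf nh nm nμ : ℕ}
    (f : (Fin nx → ℝ) →ᵃ[ℝ] (Fin nf → ℝ))
    (F : (Fin nx → ℝ) →ᵃ[ℝ] Matrix (Fin nf) (Fin nz) ℝ)
    -- polyhedral support:
    (H : Matrix (Fin nh) (Fin nz) ℝ) (h : Fin nh → ℝ) (hh : 0 ≤ h)
    (hZne : ∃ z : Fin nz → ℝ, H.mulVec z ≤ h)
    -- polyhedral penalty:
    (M : Matrix (Fin nm) (Fin nz) ℝ) (N : Matrix (Fin nm) (Fin nμ) ℝ)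
    (s t : Fin nm → ℝ)
    (V : Set ((Fin nz → ℝ) × ℝ))
    (hV : V = {le | 0 ≤ le.2 ∧
      ∃ μ : Fin nμ → ℝ, M.mulVec le.1 + N.mulVec μ + le.2 • s ≤ t})
    (hVbdd : Bornology.IsBounded V)
    (hV0 : ((0 : Fin nz → ℝ), (0 : ℝ)) ∈ V)
    (hslater : ∃ μhat : Fin nμ → ℝ, ∀ i, (N.mulVec μhat) i < t i)
    (p : (Fin nz → ℝ) → ℝ)
    (hp : ∀ ζ, p ζ = sSup {v : ℝ | ∃ le ∈ V, v = le.1 ⬝ᵥ ζ - le.2})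
    (X : Set (Fin nx → ℝ))
    (x : Fin nx → ℝ) (hx : x ∈ X) (υ k : ℝ) (hk : 0 ≤ k) :
    -- `max_i (fᵢ(x) + Fᵢ(x)z) − k·p(z) ≤ υ` for all `z ∈ Z` …
    (∀ z : Fin nz → ℝ, H.mulVec z ≤ h →
        ∀ i : Fin nf, (f x + (F x).mulVec z) i - k * p z ≤ υ)
    ↔ -- … iff the affine dual recourse constraints hold on the simplex `P`.
    (∃ (β : (Fin nf → ℝ) →ᵃ[ℝ] (Fin nh → ℝ)) (μ : (Fin nf → ℝ) →ᵃ[ℝ] (Fin nμ → ℝ))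
        (η : (Fin nf → ℝ) →ᵃ[ℝ] ℝ),
      ∀ ρ : Fin nf → ℝ, 0 ≤ ρ → ∑ i, ρ i = 1 →
        ρ ⬝ᵥ f x + β ρ ⬝ᵥ h + η ρ ≤ υ ∧
        M.mulVec ((F x)ᵀ.mulVec ρ - Hᵀ.mulVec (β ρ)) + N.mulVec (μ ρ)
            + η ρ • s ≤ k • t ∧
        0 ≤ β ρ ∧ 0 ≤ η ρ) := by
  classical
  -- basic facts about `p`
  obtain ⟨C, hCV⟩ := (Metric.isBounded_iff_subset_ball (0 : (Fin nz → ℝ) × ℝ)).mp hVbdd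
  have hbound : ∀ le ∈ V, (∀ j, |le.1 j| ≤ C) ∧ |le.2| ≤ C := by
    intro le hle
    have hball := hCV hle
    rw [Metric.mem_ball] at hball
    have hdist : dist le (0 : (Fin nz → ℝ) × ℝ) = max (dist le.1 0) (dist le.2 0) :=
      Prod.dist_eq
    constructor
    · intro j
      have h5 : dist (le.1 j) 0 ≤ dist le.1 0 := dist_le_pi_dist le.1 0 j
      have h6 : dist le.1 0 ≤ dist le (0 : (Fin nz → ℝ) × ℝ) := by
        rw [hdist]; exact le_max_left _ _
      rw [Real.dist_eq, sub_zero] at h5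
      linarith
    · have h6 : dist le.2 0 ≤ dist le (0 : (Fin nz → ℝ) × ℝ) := by
        rw [hdist]; exact le_max_right _ _
      rw [Real.dist_eq, sub_zero] at h6
      linarith
  have hC0 : 0 ≤ C := le_trans (abs_nonneg _) (hbound _ hV0).2
  have hbddp : ∀ z : Fin nz → ℝ, BddAbove {v : ℝ | ∃ le ∈ V, v = le.1 ⬝ᵥ z - le.2} := by
    intro z
    refine ⟨C * (∑ j, |z j|) + C, ?_⟩
    rintro v ⟨⟨lam, eta⟩, hmem, rfl⟩
    obtain ⟨h1, h2⟩ := hbound _ hmem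
    calc lam ⬝ᵥ z - eta ≤ |lam ⬝ᵥ z| + |eta| := by
          have := le_abs_self (lam ⬝ᵥ z); have := neg_abs_le eta; linarith
      _ ≤ (∑ j, |lam j * z j|) + |eta| := by
          have := Finset.abs_sum_le_sum_abs (fun j => lam j * z j) Finset.univ
          exact add_le_add this (le_refl _)
      _ ≤ (∑ j, C * |z j|) + C := by
          refine add_le_add (Finset.sum_le_sum fun j _ => ?_) h2
          rw [abs_mul]
          exact mul_le_mul_of_nonneg_right (h1 j) (abs_nonneg _)
      _ = C * (∑ j, |z j|) + C := by rw [Finset.mul_sum]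
  have hple : ∀ (z : Fin nz → ℝ) (lam : Fin nz → ℝ) (eta : ℝ), (lam, eta) ∈ V →
      lam ⬝ᵥ z - eta ≤ p z := by
    intro z lam eta hmem
    rw [hp]
    exact le_csSup (hbddp z) ⟨(lam, eta), hmem, rfl⟩
  have hpub : ∀ (z : Fin nz → ℝ) (w : ℝ),
      (∀ le ∈ V, le.1 ⬝ᵥ z - le.2 ≤ w) → p z ≤ w := by
    intro z w hw
    rw [hp]
    exact csSup_le ⟨0, ⟨(0, 0), hV0, by simp⟩⟩ (by rintro v ⟨le, hle, rfl⟩; exact hw le hle)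
  have hμ₀ : ∃ μ₀ : Fin nμ → ℝ, N.mulVec μ₀ ≤ t := by
    rw [hV] at hV0
    obtain ⟨-, μ₀, hμ₀⟩ := hV0
    exact ⟨μ₀, by simpa using hμ₀⟩
  obtain ⟨μ₀, hμ₀⟩ := hμ₀
  constructor
  · -- forward direction
    intro hyp
    obtain ⟨z₀, hz₀⟩ := hZne
    -- Step 1: strong duality for the inner LP defining `p z₀`.
    have inner_dual : ∃ π : Fin nm → ℝ, 0 ≤ π ∧ Mᵀ.mulVec π = z₀ ∧ Nᵀ.mulVec π = 0 ∧
        -1 ≤ s ⬝ᵥ π ∧ t ⬝ᵥ π ≤ p z₀ := by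
      set AI : Matrix (Fin nm ⊕ Unit) ((Fin nz ⊕ Fin nμ) ⊕ Unit) ℝ := fun i j =>
        match i, j with
        | Sum.inl i, Sum.inl (Sum.inl j) => M i j
        | Sum.inl i, Sum.inl (Sum.inr j) => N i j
        | Sum.inl i, Sum.inr _ => s i
        | Sum.inr _, Sum.inl _ => 0
        | Sum.inr _, Sum.inr _ => -1
        with hAI
      have hmvI : ∀ (xv : (Fin nz ⊕ Fin nμ) ⊕ Unit → ℝ) (i : Fin nm),
          (AI.mulVec xv) (Sum.inl i) = (∑ j, M i j * xv (Sum.inl (Sum.inl j)))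
            + (∑ j, N i j * xv (Sum.inl (Sum.inr j))) + s i * xv (Sum.inr ()) := by
        intro xv i
        simp [AI, Matrix.mulVec, dotProduct, Fintype.sum_sum_type, add_assoc]
      have hmvI' : ∀ (xv : (Fin nz ⊕ Fin nμ) ⊕ Unit → ℝ),
          (AI.mulVec xv) (Sum.inr ()) = -xv (Sum.inr ()) := by
        intro xv
        simp [AI, Matrix.mulVec, dotProduct, Fintype.sum_sum_type]
      obtain ⟨y, hy, heq, hbd⟩ := farkas_affine AI
        (Sum.elim t (fun _ => 0))
        (Sum.elim (Sum.elim z₀ 0) (fun _ => -1)) (p z₀)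
        (by
          refine ⟨Sum.elim (Sum.elim 0 μ₀) (fun _ => 0), fun i => ?_⟩
          rcases i with i | i
          · rw [hmvI]
            simpa [Matrix.mulVec, dotProduct] using hμ₀ i
          · rw [Sum.elim_inr]
            cases i
            rw [hmvI']
            simp)
        (by
          intro xv hxv
          set lam : Fin nz → ℝ := fun j => xv (Sum.inl (Sum.inl j)) with hlamd
          set mu : Fin nμ → ℝ := fun j => xv (Sum.inl (Sum.inr j)) with hmud
          set eta : ℝ := xv (Sum.inr ()) with hetad
          have heta : 0 ≤ eta := by
            have := hxv (Sum.inr ())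
            rw [hmvI'] at this
            simp only [Sum.elim_inr] at this
            linarith
          have hmemV : (lam, eta) ∈ V := by
            rw [hV]
            refine ⟨heta, mu, fun i => ?_⟩
            have := hxv (Sum.inl i)
            rw [hmvI] at this
            simp only [Sum.elim_inl] at this
            simp only [Pi.add_apply, Pi.smul_apply, smul_eq_mul, Matrix.mulVec,
              dotProduct]
            calc (∑ j, M i j * lam j) + (∑ j, N i j * mu j) + eta * s i
                = (∑ j, M i j * lam j) + (∑ j, N i j * mu j) + s i * eta := by ring
              _ ≤ t i := this
          have hobj : Sum.elim (Sum.elim z₀ 0) (fun _ => -1) ⬝ᵥ xv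
              = z₀ ⬝ᵥ lam - eta := by
            rw [hetad, hlamd]
            simp [dotProduct, Fintype.sum_sum_type, sub_eq_add_neg]
          rw [hobj, dotProduct_comm]
          exact hple z₀ lam eta hmemV)
      set π : Fin nm → ℝ := fun i => y (Sum.inl i) with hπ
      refine ⟨π, fun i => hy _, ?_, ?_, ?_, ?_⟩
      · ext j
        have := congrFun heq (Sum.inl (Sum.inl j))
        simp only [Matrix.mulVec, dotProduct, Matrix.transpose_apply,
          Fintype.sum_sum_type, AI, Matrix.transpose, Matrix.of_apply, Sum.elim_inl] at this ⊢
        simpa using this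
      · ext j
        have := congrFun heq (Sum.inl (Sum.inr j))
        simp only [Matrix.mulVec, dotProduct, Matrix.transpose_apply,
          Fintype.sum_sum_type, AI, Matrix.transpose, Matrix.of_apply, Sum.elim_inl] at this ⊢
        simpa using this
      · have h9 := congrFun heq (Sum.inr ())
        have hσ : (0:ℝ) ≤ y (Sum.inr ()) := hy _
        simp only [Matrix.mulVec, dotProduct, Matrix.transpose_apply,
          Fintype.sum_sum_type, AI, Matrix.transpose, Matrix.of_apply, Sum.elim_inr] at h9
        have h10 : (∑ i, s i * y (Sum.inl i)) - y (Sum.inr ()) = -1 := by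
          simpa [sub_eq_add_neg] using h9
        have h11 : s ⬝ᵥ π = ∑ i, s i * y (Sum.inl i) := by
          rw [hπ]; simp [dotProduct]
        rw [h11]
        linarith
      · rw [dotProduct, Fintype.sum_sum_type] at hbd
        simp only [Sum.elim_inl, Sum.elim_inr] at hbd
        simpa [dotProduct, π] using le_trans (by simp) hbd
    obtain ⟨π₀, hπ₀, hMπ₀, hNπ₀, hsπ₀, htπ₀⟩ := inner_dual
    -- Step 2: vertex certificates
    have vertex : ∀ i : Fin nf, ∃ (bb : Fin nh → ℝ) (mm : Fin nμ → ℝ) (ee : ℝ),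
        0 ≤ bb ∧ 0 ≤ ee ∧ f x i + bb ⬝ᵥ h + ee ≤ υ ∧
        M.mulVec ((F x) i - Hᵀ.mulVec bb) + N.mulVec mm + ee • s ≤ k • t := by
      intro i
      set AO : Matrix (Fin nh ⊕ (Unit ⊕ (Unit ⊕ Fin nm))) (Fin nz ⊕ (Unit ⊕ Fin nm)) ℝ :=
        fun r j =>
          match r, j with
          | Sum.inl r, Sum.inl j => H r j
          | Sum.inr (Sum.inl _), Sum.inr (Sum.inr i0) => -s i0
          | Sum.inr (Sum.inr (Sum.inl _)), Sum.inr (Sum.inl _) => -1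
          | Sum.inr (Sum.inr (Sum.inl _)), Sum.inr (Sum.inr i0) => t i0
          | Sum.inr (Sum.inr (Sum.inr i')), Sum.inr (Sum.inr i0) =>
              if i0 = i' then -1 else 0
          | _, _ => 0
        with hAO
      set BO : Matrix (Fin nz ⊕ Fin nμ) (Fin nz ⊕ (Unit ⊕ Fin nm)) ℝ :=
        fun r j =>
          match r, j with
          | Sum.inl j', Sum.inl j => if j = j' then -1 else 0
          | Sum.inl j', Sum.inr (Sum.inr i0) => M i0 j'
          | Sum.inr j'', Sum.inr (Sum.inr i0) => N i0 j''
          | _, _ => 0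
        with hBO
      -- mulVec expansions
      have hAO1 : ∀ (xv : Fin nz ⊕ (Unit ⊕ Fin nm) → ℝ) (r : Fin nh),
          (AO.mulVec xv) (Sum.inl r) = ∑ j, H r j * xv (Sum.inl j) := by
        intro xv r
        simp [AO, Matrix.mulVec, dotProduct, Fintype.sum_sum_type]
      have hAO2 : ∀ (xv : Fin nz ⊕ (Unit ⊕ Fin nm) → ℝ),
          (AO.mulVec xv) (Sum.inr (Sum.inl ()))
            = -∑ i0, s i0 * xv (Sum.inr (Sum.inr i0)) := by
        intro xv
        simp [AO, Matrix.mulVec, dotProduct, Fintype.sum_sum_type,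
          Finset.sum_neg_distrib]
      have hAO3 : ∀ (xv : Fin nz ⊕ (Unit ⊕ Fin nm) → ℝ),
          (AO.mulVec xv) (Sum.inr (Sum.inr (Sum.inl ())))
            = -xv (Sum.inr (Sum.inl ())) + ∑ i0, t i0 * xv (Sum.inr (Sum.inr i0)) := by
        intro xv
        simp [AO, Matrix.mulVec, dotProduct, Fintype.sum_sum_type]
      have hAO4 : ∀ (xv : Fin nz ⊕ (Unit ⊕ Fin nm) → ℝ) (i' : Fin nm),
          (AO.mulVec xv) (Sum.inr (Sum.inr (Sum.inr i')))
            = -xv (Sum.inr (Sum.inr i')) := by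
        intro xv i'
        simp [AO, Matrix.mulVec, dotProduct, Fintype.sum_sum_type, ite_mul,
          Finset.sum_ite_eq]
      have hBO1 : ∀ (xv : Fin nz ⊕ (Unit ⊕ Fin nm) → ℝ) (j' : Fin nz),
          (BO.mulVec xv) (Sum.inl j')
            = -xv (Sum.inl j') + ∑ i0, M i0 j' * xv (Sum.inr (Sum.inr i0)) := by
        intro xv j'
        simp [BO, Matrix.mulVec, dotProduct, Fintype.sum_sum_type, ite_mul,
          Finset.sum_ite_eq]
      have hBO2 : ∀ (xv : Fin nz ⊕ (Unit ⊕ Fin nm) → ℝ) (j'' : Fin nμ),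
          (BO.mulVec xv) (Sum.inr j'')
            = ∑ i0, N i0 j'' * xv (Sum.inr (Sum.inr i0)) := by
        intro xv j''
        simp [BO, Matrix.mulVec, dotProduct, Fintype.sum_sum_type]
      obtain ⟨y, w2, hy, heq, hbd⟩ := farkas_mixed AO BO
        (Sum.elim h (Sum.elim (fun _ => 1) (Sum.elim (fun _ => 0) (fun _ => 0))))
        (fun _ => 0)
        (Sum.elim ((F x) i) (Sum.elim (fun _ => -k) (fun _ => 0)))
        (υ - f x i)
        (by
          -- feasibility
          refine ⟨Sum.elim z₀ (Sum.elim (fun _ => p z₀) π₀), fun r => ?_, ?_⟩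
          · rcases r with r | r | r | r
            · rw [hAO1]
              simpa [Matrix.mulVec, dotProduct] using hz₀ r
            · cases r
              rw [hAO2]
              simp only [Sum.elim_inr, Sum.elim_inl]
              have hd : s ⬝ᵥ π₀ = ∑ i0, s i0 * π₀ i0 := rfl
              rw [hd] at hsπ₀
              simpa using by linarith
            · cases r
              rw [hAO3]
              simp only [Sum.elim_inr, Sum.elim_inl]
              have hd : t ⬝ᵥ π₀ = ∑ i0, t i0 * π₀ i0 := rfl
              rw [hd] at htπ₀
              simpa using by linarith
            · rw [hAO4]
              simp only [Sum.elim_inr]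
              simpa using hπ₀ r
          · ext r
            rcases r with j' | j''
            · rw [hBO1]
              simp only [Sum.elim_inl, Sum.elim_inr, Pi.zero_apply]
              have hd := congrFun hMπ₀ j'
              simp only [Matrix.mulVec, dotProduct, Matrix.transpose_apply] at hd
              linarith
            · rw [hBO2]
              simp only [Sum.elim_inr, Pi.zero_apply]
              have hd := congrFun hNπ₀ j''
              simp only [Matrix.mulVec, dotProduct, Matrix.transpose_apply,
                Pi.zero_apply] at hd
              simpa using hd)
        (by
          -- upper bound (weak duality)
          intro xv hineq heqc
          set zv : Fin nz → ℝ := fun j => xv (Sum.inl j) with hzv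
          set wv : ℝ := xv (Sum.inr (Sum.inl ())) with hwv
          set πv : Fin nm → ℝ := fun i0 => xv (Sum.inr (Sum.inr i0)) with hπv
          have hHz : H.mulVec zv ≤ h := by
            intro r
            have hd := hineq (Sum.inl r); rw [hAO1] at hd
            simpa [Matrix.mulVec, dotProduct, hzv] using hd
          have hsv : -1 ≤ ∑ i0, s i0 * πv i0 := by
            have hd := hineq (Sum.inr (Sum.inl ())); rw [hAO2] at hd
            simp only [Sum.elim_inr, Sum.elim_inl] at hd
            linarith
          have htv : ∑ i0, t i0 * πv i0 ≤ wv := by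
            have hd := hineq (Sum.inr (Sum.inr (Sum.inl ()))); rw [hAO3] at hd
            simp only [Sum.elim_inr, Sum.elim_inl] at hd
            linarith
          have hπv0 : 0 ≤ πv := by
            intro i0
            have hd := hineq (Sum.inr (Sum.inr (Sum.inr i0))); rw [hAO4] at hd
            simp only [Sum.elim_inr] at hd
            exact neg_nonpos.mp (by simpa using hd)
          have hMz : Mᵀ.mulVec πv = zv := by
            ext j'
            have hd := congrFun heqc (Sum.inl j'); rw [hBO1] at hd
            simp only [Matrix.mulVec, dotProduct, Matrix.transpose_apply]
            linarith
          have hNz : Nᵀ.mulVec πv = 0 := by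
            ext j''
            have hd := congrFun heqc (Sum.inr j''); rw [hBO2] at hd
            simp only [Pi.zero_apply]
            simpa [Matrix.mulVec, dotProduct, Matrix.transpose_apply] using hd
          have hpzw : p zv ≤ wv := by
            refine hpub zv wv ?_
            rintro ⟨lam, eta⟩ hle
            rw [hV] at hle
            obtain ⟨heta, mu, hmu⟩ := hle
            have h1 : lam ⬝ᵥ zv = πv ⬝ᵥ M.mulVec lam := by
              rw [← hMz, dotProduct_comm, dot_tm]
            have h2 : πv ⬝ᵥ N.mulVec mu = 0 := by
              rw [← dot_tm, hNz, zero_dotProduct]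
            have h3 : πv ⬝ᵥ M.mulVec lam
                ≤ πv ⬝ᵥ (fun i0 => t i0 - (N.mulVec mu) i0 - eta * s i0) := by
              refine dot_le_dot hπv0 ?_
              intro i0
              have hd := hmu i0
              simp only [Pi.add_apply, Pi.smul_apply, smul_eq_mul] at hd
              dsimp only
              linarith
            have h4 : πv ⬝ᵥ (fun i0 => t i0 - (N.mulVec mu) i0 - eta * s i0)
                = πv ⬝ᵥ t - πv ⬝ᵥ N.mulVec mu - eta * (πv ⬝ᵥ s) := by
              simp only [dotProduct, Finset.mul_sum]
              rw [← Finset.sum_sub_distrib, ← Finset.sum_sub_distrib]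
              exact Finset.sum_congr rfl fun i0 _ => by ring
            have h5 : πv ⬝ᵥ s = ∑ i0, s i0 * πv i0 :=
              Finset.sum_congr rfl fun i0 _ => mul_comm _ _
            have h6 : πv ⬝ᵥ t = ∑ i0, t i0 * πv i0 :=
              Finset.sum_congr rfl fun i0 _ => mul_comm _ _
            have h7 : -eta ≤ eta * (∑ i0, s i0 * πv i0) := by nlinarith
            dsimp only
            rw [h1]
            rw [h2, h5, h6] at h4
            linarith [h3, h4]
          have hobj : (Sum.elim ((F x) i) (Sum.elim (fun _ => -k) (fun _ => 0))) ⬝ᵥ xv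
              = (F x) i ⬝ᵥ zv - k * wv := by
            rw [hwv, hzv]
            simp [dotProduct, Fintype.sum_sum_type, sub_eq_add_neg]
          rw [hobj]
          have hyz := hyp zv hHz i
          have hgz : (f x + (F x).mulVec zv) i = f x i + (F x) i ⬝ᵥ zv := rfl
          rw [hgz] at hyz
          linarith [mul_le_mul_of_nonneg_left hpzw hk])
      -- extract the certificate
      set βv : Fin nh → ℝ := fun r => y (Sum.inl r) with hβv
      set α : ℝ := y (Sum.inr (Sum.inl ())) with hα
      set θ : ℝ := y (Sum.inr (Sum.inr (Sum.inl ()))) with hθ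
      set νv : Fin nm → ℝ := fun i0 => y (Sum.inr (Sum.inr (Sum.inr i0))) with hνv
      set γ : Fin nz → ℝ := fun j => w2 (Sum.inl j) with hγ
      set δv : Fin nμ → ℝ := fun j => w2 (Sum.inr j) with hδv
      have hcolz : ∀ j, (∑ r, H r j * βv r) - γ j = (F x) i j := by
        intro j
        have hd := congrFun heq (Sum.inl j)
        simp only [Pi.add_apply, Matrix.mulVec, dotProduct, Matrix.transpose_apply,
          Fintype.sum_sum_type, AO, BO, Matrix.transpose, Matrix.of_apply, Sum.elim_inl, ite_mul, neg_mul, one_mul, zero_mul,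
          Finset.sum_ite_eq, Finset.mem_univ, if_true, Finset.sum_const_zero, add_zero,
          zero_add, Finset.sum_neg_distrib] at hd
        rw [sub_eq_add_neg]
        convert hd using 2 <;> simp
      have hcolw : θ = k := by
        have hd := congrFun heq (Sum.inr (Sum.inl ()))
        simp only [Pi.add_apply, Matrix.mulVec, dotProduct, Matrix.transpose_apply,
          Fintype.sum_sum_type, AO, BO, Matrix.transpose, Matrix.of_apply, Sum.elim_inr,
          Sum.elim_inl, ite_mul, neg_mul, one_mul,
          zero_mul, Finset.sum_const_zero, add_zero, zero_add,
          Finset.sum_neg_distrib] at hd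
        have hd2 : -θ = -k := by simpa using hd
        linarith
      have hcolπ : ∀ i0, -s i0 * α + t i0 * θ - νv i0
          + (∑ j, M i0 j * γ j) + (∑ j'', N i0 j'' * δv j'') = 0 := by
        intro i0
        have hd := congrFun heq (Sum.inr (Sum.inr i0))
        simp only [Pi.add_apply, Matrix.mulVec, dotProduct, Matrix.transpose_apply,
          Fintype.sum_sum_type, AO, BO, Matrix.transpose, Matrix.of_apply, Sum.elim_inr,
          Sum.elim_inl, ite_mul, neg_mul, one_mul,
          zero_mul, Finset.sum_ite_eq, Finset.mem_univ, if_true, Finset.sum_const_zero,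
          add_zero, zero_add, Finset.sum_neg_distrib] at hd
        have hd2 : -(s i0 * α) + (t i0 * θ + -νv i0)
            + ((∑ j, M i0 j * γ j) + ∑ j'', N i0 j'' * δv j'') = 0 := by
          simpa using hd
        linarith [hd2]
      have hbd2 : f x i + βv ⬝ᵥ h + α ≤ υ := by
        rw [dotProduct, Fintype.sum_sum_type, Fintype.sum_sum_type,
          Fintype.sum_sum_type] at hbd
        simp only [Sum.elim_inl, Sum.elim_inr, one_mul, zero_mul, Finset.sum_const_zero,
          add_zero, zero_dotProduct] at hbd
        have hβh : βv ⬝ᵥ h = ∑ r, h r * y (Sum.inl r) :=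
          Finset.sum_congr rfl fun r _ => mul_comm _ _
        rw [hβh]
        have hu1 : (∑ x : Unit, y (Sum.inr (Sum.inl x))) = α := by simp [hα]
        have h00 : (fun _ : Fin nz ⊕ Fin nμ => (0:ℝ)) ⬝ᵥ w2 = 0 := by
          simp [dotProduct]
        rw [h00, hu1] at hbd
        linarith [hbd]
      refine ⟨βv, fun j => -δv j, α, fun r => hy _, hy _, hbd2, ?_⟩
      intro i0
      have e1 : (M.mulVec ((F x) i - Hᵀ.mulVec βv)) i0 = -∑ j, M i0 j * γ j := by
        simp only [Matrix.mulVec, dotProduct, Pi.sub_apply, Matrix.transpose_apply]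
        rw [← Finset.sum_neg_distrib]
        refine Finset.sum_congr rfl fun j _ => ?_
        have h8 : (F x) i j - ∑ r, H r j * βv r = -γ j := by linarith [hcolz j]
        rw [h8]
        ring
      have e2 : (N.mulVec (fun j => -δv j)) i0 = -∑ j'', N i0 j'' * δv j'' := by
        simp only [Matrix.mulVec, dotProduct, mul_neg]
        rw [Finset.sum_neg_distrib]
      simp only [Pi.add_apply, Pi.smul_apply, smul_eq_mul]
      rw [e1, e2]
      have hν0 : (0:ℝ) ≤ νv i0 := hy _
      have := hcolπ i0
      rw [hcolw] at this
      nlinarith [this, hν0]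
    -- Step 3: assemble the affine maps from the vertex certificates
    choose Bv Mv Ev hBv0 hEv0 hcon1 hcon2 using vertex
    set βL : (Fin nf → ℝ) →ₗ[ℝ] (Fin nh → ℝ) :=
      Matrix.mulVecLin (Matrix.of fun r i => Bv i r) with hβL
    set μL : (Fin nf → ℝ) →ₗ[ℝ] (Fin nμ → ℝ) :=
      Matrix.mulVecLin (Matrix.of fun j i => Mv i j) with hμL
    set ηL : (Fin nf → ℝ) →ₗ[ℝ] ℝ :=
      { toFun := fun ρ => ∑ i, Ev i * ρ i
        map_add' := fun a b => by
          simp only [Pi.add_apply, mul_add]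
          rw [Finset.sum_add_distrib]
        map_smul' := fun r a => by
          simp only [Pi.smul_apply, smul_eq_mul, RingHom.id_apply]
          rw [Finset.mul_sum]
          exact Finset.sum_congr rfl fun i _ => by ring } with hηL
    refine ⟨βL.toAffineMap, μL.toAffineMap, ηL.toAffineMap, ?_⟩
    intro ρ hρ0 hρ1
    have hρ0' : ∀ i, (0:ℝ) ≤ ρ i := fun i => hρ0 i
    have hβval : ∀ r, (βL.toAffineMap ρ) r = ∑ i, Bv i r * ρ i := by
      intro r
      simp [βL, Matrix.mulVec, dotProduct]
    have hμval : ∀ j, (μL.toAffineMap ρ) j = ∑ i, Mv i j * ρ i := by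
      intro j
      simp [μL, Matrix.mulVec, dotProduct]
    have hηval : ηL.toAffineMap ρ = ∑ i, Ev i * ρ i := rfl
    refine ⟨?_, ?_, ?_, ?_⟩
    · -- first constraint
      have e0 : ρ ⬝ᵥ f x = ∑ i, ρ i * f x i := rfl
      have e1 : (βL.toAffineMap ρ) ⬝ᵥ h = ∑ i, ρ i * (Bv i ⬝ᵥ h) := by
        simp only [dotProduct, hβval, Finset.sum_mul, Finset.mul_sum]
        rw [Finset.sum_comm]
        exact Finset.sum_congr rfl fun i _ => Finset.sum_congr rfl fun r _ => by ring
      have e2 : ηL.toAffineMap ρ = ∑ i, ρ i * Ev i := by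
        rw [hηval]
        exact Finset.sum_congr rfl fun i _ => by ring
      rw [e0, e1, e2, ← Finset.sum_add_distrib, ← Finset.sum_add_distrib]
      calc ∑ i, (ρ i * f x i + ρ i * (Bv i ⬝ᵥ h) + ρ i * Ev i)
          ≤ ∑ i, ρ i * υ := by
            refine Finset.sum_le_sum fun i _ => ?_
            have hc := hcon1 i
            calc ρ i * f x i + ρ i * (Bv i ⬝ᵥ h) + ρ i * Ev i
                = ρ i * (f x i + Bv i ⬝ᵥ h + Ev i) := by ring
              _ ≤ ρ i * υ := mul_le_mul_of_nonneg_left hc (hρ0' i)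
        _ = υ := by rw [← Finset.sum_mul, hρ1, one_mul]
    · -- second constraint
      intro r0
      have hv : ((F x)ᵀ.mulVec ρ - Hᵀ.mulVec (βL.toAffineMap ρ))
          = fun j => ∑ i, ρ i * ((F x) i j - (Hᵀ.mulVec (Bv i)) j) := by
        funext j
        simp only [Pi.sub_apply, Matrix.mulVec, dotProduct, Matrix.transpose_apply,
          hβval]
        rw [show (∑ r, H r j * ∑ i, Bv i r * ρ i) = ∑ i, ∑ r, H r j * (Bv i r * ρ i) by
          simp only [Finset.mul_sum]; exact Finset.sum_comm]
        rw [← Finset.sum_sub_distrib]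
        refine Finset.sum_congr rfl fun i _ => ?_
        rw [mul_sub, Finset.mul_sum]
        congr 1
        · ring
        · exact Finset.sum_congr rfl fun r _ => by ring
      have hA : (M.mulVec ((F x)ᵀ.mulVec ρ - Hᵀ.mulVec (βL.toAffineMap ρ))) r0
          = ∑ i, ρ i * (M.mulVec ((F x) i - Hᵀ.mulVec (Bv i))) r0 := by
        calc (M.mulVec ((F x)ᵀ.mulVec ρ - Hᵀ.mulVec (βL.toAffineMap ρ))) r0
            = ∑ j, M r0 j * (∑ i, ρ i * ((F x) i j - (Hᵀ.mulVec (Bv i)) j)) := by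
              rw [show (M.mulVec ((F x)ᵀ.mulVec ρ - Hᵀ.mulVec (βL.toAffineMap ρ))) r0
                  = ∑ j, M r0 j * (((F x)ᵀ.mulVec ρ - Hᵀ.mulVec (βL.toAffineMap ρ)) j)
                  from rfl]
              rw [hv]
          _ = ∑ i, ∑ j, M r0 j * (ρ i * ((F x) i j - (Hᵀ.mulVec (Bv i)) j)) := by
              simp only [Finset.mul_sum]; exact Finset.sum_comm
          _ = ∑ i, ρ i * (M.mulVec ((F x) i - Hᵀ.mulVec (Bv i))) r0 := by
              refine Finset.sum_congr rfl fun i _ => ?_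
              rw [show (M.mulVec ((F x) i - Hᵀ.mulVec (Bv i))) r0
                  = ∑ j, M r0 j * (((F x) i - Hᵀ.mulVec (Bv i)) j) from rfl]
              rw [Finset.mul_sum]
              exact Finset.sum_congr rfl fun j _ => by simp only [Pi.sub_apply]; ring
      have hB : (N.mulVec (μL.toAffineMap ρ)) r0 = ∑ i, ρ i * (N.mulVec (Mv i)) r0 := by
        calc (N.mulVec (μL.toAffineMap ρ)) r0
            = ∑ j, N r0 j * ∑ i, Mv i j * ρ i := by
              rw [show (N.mulVec (μL.toAffineMap ρ)) r0
                  = ∑ j, N r0 j * (μL.toAffineMap ρ) j from rfl]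
              exact Finset.sum_congr rfl fun j _ => by rw [hμval]
          _ = ∑ i, ∑ j, N r0 j * (Mv i j * ρ i) := by
              simp only [Finset.mul_sum]; exact Finset.sum_comm
          _ = ∑ i, ρ i * (N.mulVec (Mv i)) r0 := by
              refine Finset.sum_congr rfl fun i _ => ?_
              rw [show (N.mulVec (Mv i)) r0 = ∑ j, N r0 j * Mv i j from rfl, Finset.mul_sum]
              exact Finset.sum_congr rfl fun j _ => by ring
      have hC : (ηL.toAffineMap ρ) * s r0 = ∑ i, ρ i * (Ev i * s r0) := by
        rw [hηval, Finset.sum_mul]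
        exact Finset.sum_congr rfl fun i _ => by ring
      simp only [Pi.add_apply, Pi.smul_apply, smul_eq_mul]
      rw [hA, hB, hC, ← Finset.sum_add_distrib, ← Finset.sum_add_distrib]
      calc ∑ i, (ρ i * (M.mulVec ((F x) i - Hᵀ.mulVec (Bv i))) r0
              + ρ i * (N.mulVec (Mv i)) r0 + ρ i * (Ev i * s r0))
          ≤ ∑ i, ρ i * (k * t r0) := by
            refine Finset.sum_le_sum fun i _ => ?_
            have hc := hcon2 i r0
            simp only [Pi.add_apply, Pi.smul_apply, smul_eq_mul] at hc
            calc ρ i * (M.mulVec ((F x) i - Hᵀ.mulVec (Bv i))) r0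
                  + ρ i * (N.mulVec (Mv i)) r0 + ρ i * (Ev i * s r0)
                = ρ i * ((M.mulVec ((F x) i - Hᵀ.mulVec (Bv i))) r0
                  + (N.mulVec (Mv i)) r0 + Ev i * s r0) := by ring
              _ ≤ ρ i * (k * t r0) := mul_le_mul_of_nonneg_left hc (hρ0' i)
        _ = k * t r0 := by rw [← Finset.sum_mul, hρ1, one_mul]
    · -- βaff ρ ≥ 0
      intro r
      rw [hβval r]
      exact Finset.sum_nonneg fun i _ => mul_nonneg (hBv0 i r) (hρ0' i)
    · -- ηaff ρ ≥ 0
      rw [hηval]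
      exact Finset.sum_nonneg fun i _ => mul_nonneg (hEv0 i) (hρ0' i)
  · -- backward direction (weak duality)
    rintro ⟨β, μA, ηA, hcons⟩ z hz i
    have he : (0:Fin nf → ℝ) ≤ Pi.single i 1 := by
      intro j
      by_cases hji : j = i <;> simp [Pi.single_apply, hji]
    have hesum : ∑ j, Pi.single i (1:ℝ) j = 1 := by
      simp [Pi.single_apply]
    obtain ⟨h1, h2, h3, h4⟩ := hcons (Pi.single i 1) he hesum
    set βi := β (Pi.single i 1) with hβi
    set μi := μA (Pi.single i 1) with hμi
    set ηi := ηA (Pi.single i 1) with hηi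
    have hρf : (Pi.single i 1 : Fin nf → ℝ) ⬝ᵥ f x = f x i := by
      simp [dotProduct, Pi.single_apply, Finset.sum_ite_eq']
    have hFρ : (F x)ᵀ.mulVec (Pi.single i 1) = (F x) i := by
      ext j
      simp [Matrix.mulVec, dotProduct, Matrix.transpose_apply, Pi.single_apply,
        Finset.sum_ite_eq']
    rw [hρf] at h1
    rw [hFρ] at h2
    set lam := (F x) i - Hᵀ.mulVec βi with hlam
    -- key : lam ⬝ᵥ z ≤ ηi + k * p z
    have hkey : lam ⬝ᵥ z ≤ ηi + k * p z := by
      rcases eq_or_lt_of_le hk with hk0 | hkpos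
      · -- k = 0 : lam must vanish
        have hlam0 : lam = 0 := by
          have hrmem : ∀ r : ℝ, 0 ≤ r → (r • lam, r * ηi) ∈ V := by
            intro r hr
            rw [hV]
            refine ⟨mul_nonneg hr h4, r • μi + μ₀, ?_⟩
            intro j
            have h2j := h2 j
            simp only [Pi.add_apply, Pi.smul_apply, smul_eq_mul, ← hk0, zero_mul,
              Pi.zero_apply] at h2j ⊢
            have hMr : (M.mulVec (r • lam)) j = r * (M.mulVec lam) j := by
              simp [Matrix.mulVec_smul]
            have hNr : (N.mulVec (r • μi + μ₀)) j
                = r * (N.mulVec μi) j + (N.mulVec μ₀) j := by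
              simp [Matrix.mulVec_add, Matrix.mulVec_smul]
            rw [hMr, hNr]
            have := hμ₀ j
            nlinarith [h2 j, hμ₀ j]
          ext j
          have hnorm : ∀ r : ℝ, 0 ≤ r → r * |lam j| ≤ C := by
            intro r hr
            have h5 := ((hbound _ (hrmem r hr)).1 j)
            simp only [Pi.smul_apply, smul_eq_mul, abs_mul, abs_of_nonneg hr] at h5
            exact h5
          by_contra hne
          have hpos : 0 < |lam j| := by
            simp only [Pi.zero_apply] at hne
            exact abs_pos.mpr hne
          have := hnorm ((C + 1) / |lam j|) (by positivity)
          rw [div_mul_cancel₀ _ (ne_of_gt hpos)] at this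
          linarith
        rw [hlam0, ← hk0]
        simpa using h4
      · -- k > 0 : scale into V
        have hmem : (k⁻¹ • lam, k⁻¹ * ηi) ∈ V := by
          rw [hV]
          refine ⟨by positivity, k⁻¹ • μi, ?_⟩
          intro j
          have h2j := h2 j
          simp only [Pi.add_apply, Pi.smul_apply, smul_eq_mul] at h2j ⊢
          have hMr : (M.mulVec (k⁻¹ • lam)) j = k⁻¹ * (M.mulVec lam) j := by
            simp [Matrix.mulVec_smul]
          have hNr : (N.mulVec (k⁻¹ • μi)) j = k⁻¹ * (N.mulVec μi) j := by
            simp [Matrix.mulVec_smul]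
          rw [hMr, hNr]
          calc k⁻¹ * (M.mulVec lam) j + k⁻¹ * (N.mulVec μi) j + k⁻¹ * ηi * s j
              = k⁻¹ * ((M.mulVec lam) j + (N.mulVec μi) j + ηi * s j) := by ring
            _ ≤ k⁻¹ * (k * t j) := by
                refine mul_le_mul_of_nonneg_left ?_ (by positivity)
                exact h2j
            _ = t j := by field_simp
        have h6 := hple z _ _ hmem
        rw [smul_dotProduct] at h6
        have h7 := mul_le_mul_of_nonneg_left h6 hk
        have h8 : k * (k⁻¹ • (lam ⬝ᵥ z) - k⁻¹ * ηi) = lam ⬝ᵥ z - ηi := by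
          simp only [smul_eq_mul]
          field_simp
        rw [h8] at h7
        linarith
    -- conclude
    have hHβ : Hᵀ.mulVec βi ⬝ᵥ z ≤ βi ⬝ᵥ h := by
      rw [dot_tm]
      exact dot_le_dot h3 hz
    have hsplit : (F x) i ⬝ᵥ z = lam ⬝ᵥ z + Hᵀ.mulVec βi ⬝ᵥ z := by
      rw [hlam, sub_dotProduct]
      ring
    have hgz : (f x + (F x).mulVec z) i = f x i + (F x) i ⬝ᵥ z := rfl
    rw [hgz]
    linarith
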